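/- For n ≥ 1 and the map C(w, ζ) = (w, e^{iπ/n}ζ) on M₀ = ℂ × ℂ*, the pullbacks satisfy C*(ω₁) = conj(ω₂) and C*(ω₂) = conj(ω₁), where ω₁ = dw + i(ζ̄^{n−1}/|ζ|^{n−1})dζ̄ and ω₂ = dw̄ + i(ζ^{n−1}/|ζ|^{n−1})dζ. -/

import Mathlib

/-- the map C(w,ζ) = (w, e^{iπ/n}ζ) on M₀ = ℂ × ℂ* satisfies
C*(ω₁) = conj(ω₂) and C*(ω₂) = conj(ω₁), where
ω₁ = dw + i(ζ̄^{n−1}/|ζ|^{n−1})dζ̄ and ω₂ = dw̄ + i(ζ^{n−1}/|ζ|^{n−1})dζ;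
stated by evaluation on a tangent vector (δw, δζ) at (w,ζ), ζ ≠ 0, with
dC(δw,δζ) = (δw, e^{iπ/n}δζ). -/
theorem stmt13 (n : ℕ) (hn : 1 ≤ n) (w ζ : ℂ) (hζ : ζ ≠ 0) (δw δζ : ℂ) :
    (δw + Complex.I *
        (((starRingEnd ℂ) (Complex.exp (Real.pi * Complex.I / n) * ζ)) ^ (n-1) /
          (‖Complex.exp (Real.pi * Complex.I / n) * ζ‖ : ℂ) ^ (n-1)) *
        (starRingEnd ℂ) (Complex.exp (Real.pi * Complex.I / n) * δζ)
      = (starRingEnd ℂ)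
          ((starRingEnd ℂ) δw +
            Complex.I * (ζ ^ (n-1) / (‖ζ‖ : ℂ) ^ (n-1)) * δζ)) ∧
    ((starRingEnd ℂ) δw + Complex.I *
        ((Complex.exp (Real.pi * Complex.I / n) * ζ) ^ (n-1) /
          (‖Complex.exp (Real.pi * Complex.I / n) * ζ‖ : ℂ) ^ (n-1)) *
        (Complex.exp (Real.pi * Complex.I / n) * δζ)
      = (starRingEnd ℂ)
          (δw + Complex.I * (((starRingEnd ℂ) ζ) ^ (n-1) / (‖ζ‖ : ℂ) ^ (n-1)) *
            (starRingEnd ℂ) δζ)) := by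
  set e := Complex.exp (Real.pi * Complex.I / n) with he_def
  have hn0 : (n : ℂ) ≠ 0 := Nat.cast_ne_zero.mpr (by omega)
  have hen : e ^ n = -1 := by
    rw [he_def, ← Complex.exp_nat_mul]
    rw [show (n : ℂ) * (Real.pi * Complex.I / n) = Real.pi * Complex.I by
      field_simp]
    exact Complex.exp_pi_mul_I
  have habs : ‖e‖ = 1 := by
    rw [he_def, Complex.norm_exp]
    norm_num [Complex.div_re, Complex.mul_re]
  have hen1 : e ^ (n-1) * e = -1 := by
    rw [← pow_succ, Nat.sub_add_cancel hn, hen]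
  have hcen1 : (starRingEnd ℂ) e ^ (n-1) * (starRingEnd ℂ) e = -1 := by
    rw [← map_pow, ← map_mul, hen1, map_neg, map_one]
  have habsζ : ((‖ζ‖ : ℂ)) ^ (n-1) ≠ 0 :=
    pow_ne_zero _ (by exact_mod_cast (norm_ne_zero_iff.mpr hζ))
  constructor
  · simp only [map_mul, norm_mul, map_add, mul_pow, habs, Complex.ofReal_one, one_mul,
      Complex.conj_conj, Complex.conj_I, map_div₀, map_pow, Complex.conj_ofReal]
    field_simp
    ring_nf
    linear_combination (Complex.I * (starRingEnd ℂ) ζ ^ (n-1) * (starRingEnd ℂ) δζ) * hcen1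
  · simp only [map_mul, norm_mul, map_add, mul_pow, habs, Complex.ofReal_one, one_mul,
      Complex.conj_conj, Complex.conj_I, map_div₀, map_pow, Complex.conj_ofReal]
    field_simp
    ring_nf
    linear_combination (Complex.I * ζ ^ (n-1) * δζ) * hen1
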